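/- arXiv:1005.5061 — 2 statements merged into one kernel-verified Lean document; each statement's English description precedes it below -/
import Mathlib

section
/- Let α₁, α₂, α₃ be integers with α_i ≥ 2, let β₁, β₂, β₃ be integers with gcd(α_i, β_i) = 1, let σ be a permutation of {1,2,3} with α_{σ(i)} = α_i for all i, and let n₁, n₂, n₃ be integers with n₁ + n₂ + n₃ = 0. Then it is impossible that β_{σ(i)} + β_i = -n_i α_i holds for all i = 1,2,3. -/
private lemma fixpt (a b m : ℤ) (ha : 2 ≤ a) (hg : IsCoprime a b)
    (he : b + b = -m * a) : a = 2 ∧ m = -b ∧ ¬ (2:ℤ) ∣ b := by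
  have hd : a ∣ 2 * b := ⟨-m, by linarith⟩
  have h2 : a ∣ 2 := hg.dvd_of_dvd_mul_right hd
  have ha2 : a = 2 := le_antisymm (Int.le_of_dvd (by norm_num) h2) ha
  subst ha2
  refine ⟨rfl, by omega, ?_⟩
  intro hb
  obtain ⟨u, v, huv⟩ := hg
  have : (2:ℤ) ∣ 1 := huv ▸ dvd_add (Dvd.dvd.mul_left dvd_rfl u) (hb.mul_left v)
  norm_num at this

private lemma nodvd (a b : ℤ) (ha : 2 ≤ a) (hg : IsCoprime a b) (hd : a ∣ b) : False := by
  have := hg.isUnit_of_dvd' dvd_rfl hd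
  rw [Int.isUnit_iff] at this
  omega

/-- Given integers `αᵢ ≥ 2`, integers `βᵢ` with `gcd(αᵢ,βᵢ) = 1`,
a permutation `σ` of `{1,2,3}` with `α_{σ(i)} = αᵢ`, and integers `nᵢ` with
`n₁ + n₂ + n₃ = 0`, it is impossible that `β_{σ(i)} + βᵢ = -nᵢ αᵢ` for all `i`. -/
theorem stmt4 (α : Fin 3 → ℤ) (β : Fin 3 → ℤ) (n : Fin 3 → ℤ)
    (hα : ∀ i, 2 ≤ α i) (hgcd : ∀ i, Int.gcd (α i) (β i) = 1)
    (σ : Equiv.Perm (Fin 3)) (hσ : ∀ i, α (σ i) = α i)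
    (hn : n 0 + n 1 + n 2 = 0) :
    ¬ (∀ i, β (σ i) + β i = -(n i) * α i) := by
  intro h
  have hc : ∀ i, IsCoprime (α i) (β i) :=
    fun i => Int.isCoprime_iff_gcd_eq_one.mpr (hgcd i)
  have h0 := h 0; have h1 := h 1; have h2 := h 2
  have hσ0 := hσ 0; have hσ1 := hσ 1; have hσ2 := hσ 2
  have hinj := σ.injective
  have hall : ∀ x : Fin 3, x = 0 ∨ x = 1 ∨ x = 2 := by decide
  rcases hall (σ 0) with e0 | e0 | e0 <;>
    rcases hall (σ 1) with e1 | e1 | e1 <;>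
      rcases hall (σ 2) with e2 | e2 | e2 <;>
  first
    | exact absurd (hinj (e0.trans e1.symm)) (by decide)
    | exact absurd (hinj (e0.trans e2.symm)) (by decide)
    | exact absurd (hinj (e1.trans e2.symm)) (by decide)
    | (rw [e0] at h0 hσ0; rw [e1] at h1 hσ1; rw [e2] at h2 hσ2)
  -- Case identity: σ = 1
  · obtain ⟨ha0, hn0, hb0⟩ := fixpt _ _ _ (hα 0) (hc 0) h0
    obtain ⟨ha1, hn1, hb1⟩ := fixpt _ _ _ (hα 1) (hc 1) h1
    obtain ⟨ha2, hn2, hb2⟩ := fixpt _ _ _ (hα 2) (hc 2) h2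
    omega
  -- Case σ = (1 2): fixes 0
  · obtain ⟨ha0, hn0, hb0⟩ := fixpt _ _ _ (hα 0) (hc 0) h0
    -- h1 : β 2 + β 1 = -n 1 * α 1, h2 : β 1 + β 2 = -n 2 * α 2, hσ1 : α 2 = α 1
    rw [hσ1] at h2
    have hne : n 1 * α 1 = n 2 * α 1 := by linarith
    have h12 : n 1 = n 2 := mul_right_cancel₀ (by have := hα 1; omega) hne
    omega
  -- Case σ = (0 1): fixes 2
  · obtain ⟨ha2, hn2, hb2⟩ := fixpt _ _ _ (hα 2) (hc 2) h2
    -- h0 : β 1 + β 0 = -n 0 * α 0, h1 : β 0 + β 1 = -n 1 * α 1, hσ0 : α 1 = α 0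
    rw [hσ0] at h1
    have hne : n 0 * α 0 = n 1 * α 0 := by linarith
    have h01 : n 0 = n 1 := mul_right_cancel₀ (by have := hα 0; omega) hne
    omega
  -- Case (1,2,0): 3-cycle 0↦1,1↦2,2↦0; hσ0 : α 1 = α 0, hσ1 : α 2 = α 1
  · rw [hσ0] at h1
    rw [hσ1, hσ0] at h2
    have hX := congrArg (· * α 0) hn
    simp only [add_mul, zero_mul] at hX
    have key : β 2 = α 0 * n 0 := by linarith
    have hc2 : IsCoprime (α 0) (β 2) := (hσ1.trans hσ0) ▸ hc 2
    exact nodvd _ _ (hα 0) hc2 ⟨n 0, key⟩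
  -- Case (2,0,1): 3-cycle 0↦2,1↦0,2↦1; hσ0 : α 2 = α 0, hσ1 : α 0 = α 1
  · rw [← hσ1] at h1
    rw [hσ0] at h2
    have hX := congrArg (· * α 0) hn
    simp only [add_mul, zero_mul] at hX
    have key : β 2 = α 0 * n 1 := by linarith
    have hc2 : IsCoprime (α 0) (β 2) := hσ0 ▸ hc 2
    exact nodvd _ _ (hα 0) hc2 ⟨n 1, key⟩
  -- Case (2,1,0): swap 0,2, fixes 1; hσ0 : α 2 = α 0
  · obtain ⟨ha1, hn1, hb1⟩ := fixpt _ _ _ (hα 1) (hc 1) h1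
    rw [hσ0] at h2
    have hne : n 0 * α 0 = n 2 * α 0 := by linarith
    have h02 : n 0 = n 2 := mul_right_cancel₀ (by have := hα 0; omega) hne
    omega
end

section
/- In the group G = ⟨q₁,q₂,q₃,t | t central, q_i^{α_i} t^{β_i} = 1, q₁q₂q₃ = 1⟩, the assignment θ(t) = t, θ(q_j) = q_k t^n, θ(q_k) = q_j t^{-n}, θ(q_m) determined by θ(q₁q₂q₃) = 1 (where {j,k,m} = {1,2,3}) defines an automorphism of G, provided α_j = α_k and β_k - β_j = n α_j. -/
/-- The defining relators of the Seifert fibered space group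
`⟨q₁,q₂,q₃,t | t qᵢ t⁻¹ qᵢ⁻¹, qᵢ^{αᵢ} t^{βᵢ}, q₁q₂q₃⟩`,
on generators `0,1,2` (the `qᵢ`) and `3` (the fiber class `t`). -/
def seifertRels (α : Fin 3 → ℕ) (β : Fin 3 → ℤ) : Set (FreeGroup (Fin 4)) :=
  (Set.range fun i : Fin 3 =>
      FreeGroup.of (3 : Fin 4) * FreeGroup.of i.castSucc *
        (FreeGroup.of (3 : Fin 4))⁻¹ * (FreeGroup.of i.castSucc)⁻¹) ∪
  (Set.range fun i : Fin 3 =>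
      FreeGroup.of i.castSucc ^ (α i) * FreeGroup.of (3 : Fin 4) ^ (β i)) ∪
  {FreeGroup.of (0 : Fin 4) * FreeGroup.of (1 : Fin 4) * FreeGroup.of (2 : Fin 4)}

namespace Stmt18Aux

variable (α : Fin 3 → ℕ) (β : Fin 3 → ℤ)

abbrev SG := PresentedGroup (seifertRels α β)

def qg (i : Fin 3) : SG α β := PresentedGroup.of i.castSucc
def tg : SG α β := PresentedGroup.of 3

lemma rel_one {r : FreeGroup (Fin 4)} (hr : r ∈ seifertRels α β) :
    PresentedGroup.mk (seifertRels α β) r = 1 :=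
  (QuotientGroup.eq_one_iff _).2 (Subgroup.subset_normalClosure hr)

lemma comm_rel (i : Fin 3) : tg α β * qg α β i = qg α β i * tg α β := by
  have h := rel_one α β (Or.inl (Or.inl ⟨i, rfl⟩))
  simp only [map_mul, map_inv] at h
  rw [mul_inv_eq_one, mul_inv_eq_iff_eq_mul] at h
  exact h

lemma pow_rel (i : Fin 3) : qg α β i ^ α i * tg α β ^ β i = 1 := by
  have h := rel_one α β (Or.inl (Or.inr ⟨i, rfl⟩))
  simp only [map_mul, map_pow, map_zpow] at h
  exact h

lemma prod_rel : qg α β 0 * qg α β 1 * qg α β 2 = 1 := by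
  have h := rel_one α β (Or.inr rfl)
  have e0 : (0 : Fin 4) = (0 : Fin 3).castSucc := rfl
  have e1 : (1 : Fin 4) = (1 : Fin 3).castSucc := rfl
  have e2 : (2 : Fin 4) = (2 : Fin 3).castSucc := rfl
  simp only [map_mul, e0, e1, e2] at h
  exact h

lemma commute_qt (i : Fin 3) : Commute (qg α β i) (tg α β) := (comm_rel α β i).symm

private lemma rot {G : Type*} [Group G] {a b c : G} (h : a * b * c = 1) : b * c * a = 1 := by
  have h2 : a⁻¹ * (a * b * c) * a = a⁻¹ * 1 * a := by rw [h]
  simpa [mul_assoc] using h2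

lemma cyc (i : Fin 3) : qg α β i * qg α β (i + 1) * qg α β (i + 2) = 1 := by
  have h := prod_rel α β
  fin_cases i
  · exact h
  · exact rot h
  · exact rot (rot h)

/-- The images of the four generators under θ. -/
def θf (n : ℤ) (j k : Fin 3) : Fin 4 → SG α β := fun x =>
  Fin.lastCases (tg α β)
    (fun i => if i = j then qg α β k * tg α β ^ n
      else if i = k then qg α β j * tg α β ^ (-n)
      else (qg α β (i + 1))⁻¹ * (qg α β (i + 2))⁻¹) x

lemma θf_last (n : ℤ) (j k : Fin 3) : θf α β n j k 3 = tg α β := by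
  have : (3 : Fin 4) = Fin.last 3 := rfl
  rw [θf, this, Fin.lastCases_last]

lemma θf_cast (n : ℤ) (j k : Fin 3) (i : Fin 3) :
    θf α β n j k i.castSucc =
      if i = j then qg α β k * tg α β ^ n
      else if i = k then qg α β j * tg α β ^ (-n)
      else (qg α β (i + 1))⁻¹ * (qg α β (i + 2))⁻¹ := by
  rw [θf, Fin.lastCases_castSucc]

lemma commute_θf_t (n : ℤ) (j k : Fin 3) (x : Fin 4) :
    Commute (θf α β n j k x) (tg α β) := by
  induction x using Fin.lastCases with
  | last =>
    have : (Fin.last 3) = (3 : Fin 4) := rfl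
    rw [this, θf_last]
  | cast i =>
    rw [θf_cast]
    split_ifs
    · exact (commute_qt α β k).mul_left ((Commute.refl (tg α β)).zpow_left n)
    · exact (commute_qt α β j).mul_left ((Commute.refl (tg α β)).zpow_left (-n))
    · exact ((commute_qt α β (i+1)).symm.inv_right.mul_right
        (commute_qt α β (i+2)).symm.inv_right).symm


lemma tq (a : ℤ) (i : Fin 3) (x : SG α β) :
    tg α β ^ a * (qg α β i * x) = qg α β i * (tg α β ^ a * x) := by
  rw [← mul_assoc, ← mul_assoc, (((commute_qt α β i).symm).zpow_left a).eq]

lemma tq' (a : ℤ) (i : Fin 3) (x : SG α β) :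
    tg α β ^ a * ((qg α β i)⁻¹ * x) = (qg α β i)⁻¹ * (tg α β ^ a * x) := by
  rw [← mul_assoc, ← mul_assoc, (((commute_qt α β i).symm).zpow_left a).inv_right.eq]

lemma tq2 (a : ℤ) (i : Fin 3) : tg α β ^ a * qg α β i = qg α β i * tg α β ^ a :=
  (((commute_qt α β i).symm).zpow_left a).eq

lemma tq2' (a : ℤ) (i : Fin 3) : tg α β ^ a * (qg α β i)⁻¹ = (qg α β i)⁻¹ * tg α β ^ a :=
  (((commute_qt α β i).symm).zpow_left a).inv_right.eq

lemma tt (a : ℤ) (x : SG α β) : tg α β ^ a * (tg α β ^ (-a) * x) = x := by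
  rw [← mul_assoc, ← zpow_add]; simp

lemma tt' (a : ℤ) (x : SG α β) : tg α β ^ (-a) * (tg α β ^ a * x) = x := by
  rw [← mul_assoc, ← zpow_add]; simp

lemma tt2 (a : ℤ) : tg α β ^ a * tg α β ^ (-a) = 1 := by rw [← zpow_add]; simp

lemma tt2' (a : ℤ) : tg α β ^ (-a) * tg α β ^ a = 1 := by rw [← zpow_add]; simp

lemma lift_cond (n : ℤ) (j k : Fin 3) (hjk : j ≠ k) (hαjk : α j = α k)
    (hβ : β k - β j = n * (α j : ℤ)) :
    ∀ r ∈ seifertRels α β, FreeGroup.lift (θf α β n j k) r = 1 := by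
  have hc2 : (α j : ℤ) = (α k : ℤ) := by exact_mod_cast hαjk
  rintro r ((⟨i, rfl⟩ | ⟨i, rfl⟩) | rfl)
  · -- commutator relator
    simp only [map_mul, map_inv, FreeGroup.lift_apply_of]
    have hc := (commute_θf_t α β n j k i.castSucc).symm.eq
    rw [θf_last, hc]
    simp [mul_assoc]
  · -- power relator
    simp only [map_mul, map_pow, map_zpow, FreeGroup.lift_apply_of]
    rw [θf_last, θf_cast]
    by_cases hij : i = j
    · subst hij
      rw [if_pos rfl]
      have hcom : Commute (qg α β k) (tg α β ^ n) := (commute_qt α β k).zpow_right n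
      rw [hcom.mul_pow]
      have ht : (tg α β ^ n) ^ α i * tg α β ^ β i = tg α β ^ β k := by
        rw [← zpow_natCast (tg α β ^ n) (α i), ← zpow_mul, ← zpow_add]
        congr 1; linarith
      rw [mul_assoc, ht, hαjk]
      exact pow_rel α β k
    · rw [if_neg hij]
      by_cases hik : i = k
      · subst hik
        rw [if_pos rfl]
        have hcom : Commute (qg α β j) (tg α β ^ (-n)) := (commute_qt α β j).zpow_right (-n)
        rw [hcom.mul_pow]
        have ht : (tg α β ^ (-n)) ^ α i * tg α β ^ β i = tg α β ^ β j := by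
          rw [← zpow_natCast (tg α β ^ (-n)) (α i), ← zpow_mul, ← zpow_add]
          congr 1
          have h5 : (α i : ℤ) = (α j : ℤ) := hc2.symm
          rw [h5]; linarith
        rw [mul_assoc, ht, ← hαjk]
        exact pow_rel α β j
      · rw [if_neg hik]
        have h2 : (qg α β (i + 2))⁻¹ = qg α β i * qg α β (i + 1) :=
          inv_eq_of_mul_eq_one_left (cyc α β i)
        rw [h2]
        set w := qg α β (i + 1) with hw
        have hcw : Commute (tg α β ^ β i) w := ((commute_qt α β (i+1)).symm).zpow_left (β i)
        calc (w⁻¹ * (qg α β i * w)) ^ α i * tg α β ^ β i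
            = (w⁻¹ * qg α β i * w⁻¹⁻¹) ^ α i * tg α β ^ β i := by rw [inv_inv, mul_assoc]
          _ = w⁻¹ * qg α β i ^ α i * w⁻¹⁻¹ * tg α β ^ β i := by rw [conj_pow]
          _ = w⁻¹ * (qg α β i ^ α i * (w * tg α β ^ β i)) := by
              rw [inv_inv]; simp [mul_assoc]
          _ = w⁻¹ * (qg α β i ^ α i * (tg α β ^ β i * w)) := by rw [← hcw.eq]
          _ = 1 := by rw [← mul_assoc (qg α β i ^ α i), pow_rel α β i]; simp
  · -- product relator
    simp only [map_mul, FreeGroup.lift_apply_of]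
    have e0 : (0 : Fin 4) = (0 : Fin 3).castSucc := rfl
    have e1 : (1 : Fin 4) = (1 : Fin 3).castSucc := rfl
    have e2 : (2 : Fin 4) = (2 : Fin 3).castSucc := rfl
    rw [e0, e1, e2, θf_cast, θf_cast, θf_cast]
    fin_cases j <;> fin_cases k <;> simp_all <;>
      simp only [← zpow_neg, mul_assoc, tq, tq', tq2, tq2', tt, tt', tt2, tt2', one_mul,
        mul_one, inv_mul_cancel_left, mul_inv_cancel_left, inv_mul_cancel, mul_inv_cancel]

def θhom (n : ℤ) (j k : Fin 3) (hjk : j ≠ k) (hαjk : α j = α k)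
    (hβ : β k - β j = n * (α j : ℤ)) : SG α β →* SG α β :=
  PresentedGroup.toGroup (lift_cond α β n j k hjk hαjk hβ)

lemma θhom_t (n : ℤ) (j k : Fin 3) (hjk : j ≠ k) (hαjk : α j = α k)
    (hβ : β k - β j = n * (α j : ℤ)) :
    θhom α β n j k hjk hαjk hβ (tg α β) = tg α β := by
  rw [tg, θhom, PresentedGroup.toGroup.of, θf_last]; rfl

lemma θhom_q (n : ℤ) (j k : Fin 3) (hjk : j ≠ k) (hαjk : α j = α k)
    (hβ : β k - β j = n * (α j : ℤ)) (i : Fin 3) :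
    θhom α β n j k hjk hαjk hβ (qg α β i) = θf α β n j k i.castSucc := by
  rw [qg, θhom, PresentedGroup.toGroup.of]

private lemma fin3_trich : ∀ a b c : Fin 3, a ≠ b → a ≠ c → b ≠ c →
    (a + 1 = b ∧ a + 2 = c) ∨ (a + 1 = c ∧ a + 2 = b) := by decide

lemma θθ (n : ℤ) (j k : Fin 3) (hjk : j ≠ k) (hαjk : α j = α k)
    (hβ : β k - β j = n * (α j : ℤ)) (x : SG α β) :
    θhom α β n j k hjk hαjk hβ (θhom α β n j k hjk hαjk hβ x) = x := by
  have h : (θhom α β n j k hjk hαjk hβ).comp (θhom α β n j k hjk hαjk hβ) =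
      MonoidHom.id (SG α β) := by
    apply PresentedGroup.ext
    intro x
    simp only [MonoidHom.comp_apply, MonoidHom.id_apply]
    induction x using Fin.lastCases with
    | last =>
      have hl : (Fin.last 3 : Fin 4) = 3 := rfl
      rw [hl]
      show θhom α β n j k hjk hαjk hβ (θhom α β n j k hjk hαjk hβ (tg α β)) = tg α β
      rw [θhom_t, θhom_t]
    | cast i =>
      show θhom α β n j k hjk hαjk hβ (θhom α β n j k hjk hαjk hβ (qg α β i)) = qg α β i
      rw [θhom_q, θf_cast]
      by_cases h1 : i = j
      · subst h1
        rw [if_pos rfl]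
        rw [map_mul, map_zpow, θhom_t, θhom_q, θf_cast,
          if_neg (Ne.symm hjk), if_pos rfl]
        rw [mul_assoc, tt2', mul_one]
      · by_cases h2 : i = k
        · subst h2
          rw [if_neg h1, if_pos rfl]
          rw [map_mul, map_zpow, θhom_t, θhom_q, θf_cast, if_pos rfl]
          rw [mul_assoc, tt2, mul_one]
        · rw [if_neg h1, if_neg h2]
          rw [map_mul, map_inv, map_inv, θhom_q, θhom_q]
          have hcyc := cyc α β i
          rcases fin3_trich i j k h1 h2 hjk with ⟨e1, e2⟩ | ⟨e1, e2⟩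
          · rw [e1, e2, θf_cast, θf_cast, if_pos rfl, if_neg (Ne.symm hjk), if_pos rfl]
            rw [e1, e2] at hcyc
            have hi : qg α β i = (qg α β k)⁻¹ * (qg α β j)⁻¹ := by
              rw [← mul_inv_rev]
              exact eq_inv_of_mul_eq_one_left (by rwa [mul_assoc] at hcyc)
            rw [hi]
            simp only [mul_inv_rev, ← zpow_neg, neg_neg, mul_assoc, tq', tq2', tt, tt',
              tt2, tt2', one_mul, mul_one]
          · rw [e1, e2, θf_cast, θf_cast, if_neg (Ne.symm hjk), if_pos rfl, if_pos rfl]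
            rw [e1, e2] at hcyc
            have hi : qg α β i = (qg α β j)⁻¹ * (qg α β k)⁻¹ := by
              rw [← mul_inv_rev]
              exact eq_inv_of_mul_eq_one_left (by rwa [mul_assoc] at hcyc)
            rw [hi]
            simp only [mul_inv_rev, ← zpow_neg, neg_neg, mul_assoc, tq', tq2', tt, tt',
              tt2, tt2', one_mul, mul_one]
  exact DFunLike.congr_fun h x

def θequiv (n : ℤ) (j k : Fin 3) (hjk : j ≠ k) (hαjk : α j = α k)
    (hβ : β k - β j = n * (α j : ℤ)) : SG α β ≃* SG α β where
  toFun := θhom α β n j k hjk hαjk hβ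
  invFun := θhom α β n j k hjk hαjk hβ
  left_inv := θθ α β n j k hjk hαjk hβ
  right_inv := θθ α β n j k hjk hαjk hβ
  map_mul' := map_mul _

end Stmt18Aux

/-- In `G = ⟨q₁,q₂,q₃,t | t central, qᵢ^{αᵢ} t^{βᵢ} = 1, q₁q₂q₃ = 1⟩`
(each `αᵢ ≥ 2`, `gcd(αᵢ,βᵢ) = 1`), if `{j,k,m} = {1,2,3}`, `α_j = α_k` and
`β_k - β_j = n α_j`, then the assignment `θ(t) = t`, `θ(q_j) = q_k tⁿ`,
`θ(q_k) = q_j t⁻ⁿ` (with `θ(q_m)` determined by `θ(q₁q₂q₃) = 1`) defines an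
automorphism of `G`. -/
theorem stmt18 (α : Fin 3 → ℕ) (β : Fin 3 → ℤ)
    (hα : ∀ i, 2 ≤ α i) (hgcd : ∀ i, Int.gcd (α i : ℤ) (β i) = 1)
    (j k m : Fin 3) (hjk : j ≠ k) (hjm : j ≠ m) (hkm : k ≠ m)
    (n : ℤ) (hαjk : α j = α k) (hβ : β k - β j = n * (α j : ℤ)) :
    ∃ θ : PresentedGroup (seifertRels α β) ≃* PresentedGroup (seifertRels α β),
      θ (PresentedGroup.of (3 : Fin 4)) = PresentedGroup.of (3 : Fin 4) ∧
      θ (PresentedGroup.of j.castSucc) =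
        PresentedGroup.of k.castSucc *
          (PresentedGroup.of (3 : Fin 4) : PresentedGroup (seifertRels α β)) ^ n ∧
      θ (PresentedGroup.of k.castSucc) =
        PresentedGroup.of j.castSucc *
          (PresentedGroup.of (3 : Fin 4) : PresentedGroup (seifertRels α β)) ^ (-n) := by
  refine ⟨Stmt18Aux.θequiv α β n j k hjk hαjk hβ, ?_, ?_, ?_⟩
  · exact Stmt18Aux.θhom_t α β n j k hjk hαjk hβ
  · show Stmt18Aux.θhom α β n j k hjk hαjk hβ (Stmt18Aux.qg α β j) = _
    rw [Stmt18Aux.θhom_q, Stmt18Aux.θf_cast, if_pos rfl]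
    rfl
  · show Stmt18Aux.θhom α β n j k hjk hαjk hβ (Stmt18Aux.qg α β k) = _
    rw [Stmt18Aux.θhom_q, Stmt18Aux.θf_cast, if_neg (Ne.symm hjk), if_pos rfl]
    rfl
end
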